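/- Let 0 < l < 1, φ(ξ) = l·ξ·|ξ| − ξ³, and ρ > 1/4. Then there exists a constant C > 0 such that for every τ ∈ ℝ and every a ≥ 1, ∫_{|ξ| ≥ a} (1+|ξ|)² / (1 + |τ − φ(ξ)|)^{4ρ} dξ ≤ C. -/

import Mathlib

open MeasureTheory ENNReal

/-- The phase function of the generalized Benjamin equation: φ(ξ) = l·ξ·|ξ| − ξ³. -/
noncomputable def benjaminPhase (l : ℝ) (ξ : ℝ) : ℝ := l * ξ * |ξ| - ξ ^ 3

/-- High-frequency bound in Lemma 4.1: for 0 < l < 1 and ρ > 1/4 there is C > 0 such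
    that for all τ ∈ ℝ and a ≥ 1, ∫_{|ξ| ≥ a} (1+|ξ|)²/(1+|τ−φ(ξ)|)^{4ρ} dξ ≤ C. -/
theorem integral_highfreq_bounded (l ρ : ℝ) (hl0 : 0 < l) (hl1 : l < 1)
    (hρ : 1 / 4 < ρ) :
    ∃ C : ℝ, 0 < C ∧ ∀ τ : ℝ, ∀ a : ℝ, 1 ≤ a →
      (∫⁻ ξ : ℝ in {ξ : ℝ | a ≤ |ξ|}, ENNReal.ofReal
          ((1 + |ξ|) ^ 2 / (1 + |τ - benjaminPhase l ξ|) ^ (4 * ρ)))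
        ≤ ENNReal.ofReal C := by
  have h4ρ : (1 : ℝ) < 4 * ρ := by linarith
  have hf₀ : Integrable (fun u : ℝ => (1 + ‖u‖) ^ (-(4 * ρ))) := by
    apply integrable_one_add_norm (E := ℝ)
    simp [h4ρ]
  set I : ℝ := ∫ u : ℝ, (1 + ‖u‖) ^ (-(4 * ρ)) with hIdef
  have hI0 : 0 ≤ I :=
    integral_nonneg fun u => Real.rpow_nonneg (by positivity) _
  refine ⟨8 * I + 1, by linarith, fun τ a ha => ?_⟩
  set φ : ℝ → ℝ := benjaminPhase l with hφdef
  have hφcont : Continuous φ := by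
    exact
      (((continuous_const.mul continuous_id).mul continuous_abs).sub
        (continuous_pow 3))
  set d : ℝ → ℝ := fun x => 2 * l * |x| - 3 * x ^ 2 with hddef
  set g : ℝ → ℝ := fun u => (1 + |τ - u|) ^ (-(4 * ρ)) with hgdef
  have hg_nonneg : ∀ u, 0 ≤ g u := fun u => Real.rpow_nonneg (by positivity) _
  have hg_int : Integrable g := by
    have := hf₀.comp_sub_left τ
    simpa [hgdef, Real.norm_eq_abs] using this
  have hg_integral : ∫ u, g u = I := by
    have := integral_sub_left_eq_self (fun u : ℝ => (1 + ‖u‖) ^ (-(4 * ρ))) volume τ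
    simpa [hgdef, hIdef, Real.norm_eq_abs] using this
  -- derivative on positive side
  have hderiv_pos : ∀ x : ℝ, 0 < x → HasDerivAt φ (d x) x := by
    intro x hx
    have h1 : HasDerivAt (fun t : ℝ => l * t ^ 2 - t ^ 3) (l * (2 * x) - 3 * x ^ 2) x := by
      have := ((hasDerivAt_pow 2 x).const_mul l).sub (hasDerivAt_pow 3 x)
      exact this.congr_deriv (by norm_num)
    have h2 : (fun t : ℝ => l * t ^ 2 - t ^ 3) =ᶠ[nhds x] φ := by
      filter_upwards [eventually_gt_nhds hx] with t ht
      simp [hφdef, benjaminPhase, abs_of_pos ht]; ring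
    have h3 := h1.congr_of_eventuallyEq h2.symm
    have : l * (2 * x) - 3 * x ^ 2 = d x := by
      simp [hddef, abs_of_pos hx]; ring
    rwa [this] at h3
  have hderiv_neg : ∀ x : ℝ, x < 0 → HasDerivAt φ (d x) x := by
    intro x hx
    have h1 : HasDerivAt (fun t : ℝ => -(l * t ^ 2) - t ^ 3) (-(l * (2 * x)) - 3 * x ^ 2) x := by
      have := (((hasDerivAt_pow 2 x).const_mul l).neg).sub (hasDerivAt_pow 3 x)
      exact this.congr_deriv (by norm_num)
    have h2 : (fun t : ℝ => -(l * t ^ 2) - t ^ 3) =ᶠ[nhds x] φ := by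
      filter_upwards [eventually_lt_nhds hx] with t ht
      simp [hφdef, benjaminPhase, abs_of_neg ht]; ring
    have h3 := h1.congr_of_eventuallyEq h2.symm
    have : -(l * (2 * x)) - 3 * x ^ 2 = d x := by
      simp [hddef, abs_of_neg hx]; ring
    rwa [this] at h3
  -- key estimate on a set where |x| ≥ 1 and φ is injective with derivative d
  have key : ∀ s : Set ℝ, MeasurableSet s → (∀ x ∈ s, 1 ≤ |x|) →
      (∀ x ∈ s, HasDerivWithinAt φ (d x) s x) → Set.InjOn φ s →
      (∫⁻ ξ : ℝ in s, ENNReal.ofReal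
          ((1 + |ξ|) ^ 2 / (1 + |τ - φ ξ|) ^ (4 * ρ))) ≤ ENNReal.ofReal (4 * I) := by
    intro s hs habs hd hinj
    have hint : IntegrableOn (fun x => |d x| • g (φ x)) s volume := by
      rw [← integrableOn_image_iff_integrableOn_abs_deriv_smul hs hd hinj g]
      exact hg_int.integrableOn
    have hint4 : IntegrableOn (fun x => 4 * (|d x| * g (φ x))) s volume := by
      simpa [smul_eq_mul, IntegrableOn] using hint.const_mul 4
    have hptwise : ∀ x ∈ s, (1 + |x|) ^ 2 / (1 + |τ - φ x|) ^ (4 * ρ)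
        ≤ 4 * (|d x| * g (φ x)) := by
      intro x hx
      have hA : (1 : ℝ) ≤ |x| := habs x hx
      have hD : (0 : ℝ) < (1 + |τ - φ x|) ^ (4 * ρ) :=
        Real.rpow_pos_of_pos (by positivity) _
      have hgφ : g (φ x) = ((1 + |τ - φ x|) ^ (4 * ρ))⁻¹ := by
        simp only [hgdef]
        rw [Real.rpow_neg (by positivity)]
      have hdx : |d x| = 3 * x ^ 2 - 2 * l * |x| := by
        simp only [hddef]
        rw [abs_of_nonpos]
        · ring
        · nlinarith [sq_abs x, abs_nonneg x]
      have hnum : (1 + |x|) ^ 2 ≤ 4 * |d x| := by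
        rw [hdx]
        nlinarith [sq_abs x, abs_nonneg x]
      calc (1 + |x|) ^ 2 / (1 + |τ - φ x|) ^ (4 * ρ)
          ≤ 4 * |d x| / (1 + |τ - φ x|) ^ (4 * ρ) := by
            exact div_le_div_of_nonneg_right hnum hD.le
        _ = 4 * (|d x| * g (φ x)) := by rw [hgφ]; ring
    calc (∫⁻ ξ : ℝ in s, ENNReal.ofReal ((1 + |ξ|) ^ 2 / (1 + |τ - φ ξ|) ^ (4 * ρ)))
        ≤ ∫⁻ x in s, ENNReal.ofReal (4 * (|d x| * g (φ x))) := by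
          apply setLIntegral_mono' hs
          intro x hx
          exact ENNReal.ofReal_le_ofReal (hptwise x hx)
      _ = ENNReal.ofReal (∫ x in s, 4 * (|d x| * g (φ x))) := by
          rw [← ofReal_integral_eq_lintegral_ofReal hint4]
          exact Filter.Eventually.of_forall fun x => by positivity
      _ ≤ ENNReal.ofReal (4 * I) := by
          apply ENNReal.ofReal_le_ofReal
          rw [integral_const_mul]
          have h1 : ∫ x in s, |d x| * g (φ x) = ∫ u in φ '' s, g u := by
            rw [integral_image_eq_integral_abs_deriv_smul hs hd hinj g]
            simp [smul_eq_mul]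
          have h2 : ∫ u in φ '' s, g u ≤ ∫ u, g u :=
            setIntegral_le_integral hg_int (Filter.Eventually.of_forall hg_nonneg)
          rw [h1]
          nlinarith [hg_integral ▸ h2]
  -- positive piece
  have hpos : (∫⁻ ξ : ℝ in Set.Ici (1 : ℝ), ENNReal.ofReal
      ((1 + |ξ|) ^ 2 / (1 + |τ - φ ξ|) ^ (4 * ρ))) ≤ ENNReal.ofReal (4 * I) := by
    apply key _ measurableSet_Ici
    · intro x hx
      rw [abs_of_pos (by linarith [Set.mem_Ici.mp hx])]
      exact hx
    · intro x hx
      exact (hderiv_pos x (by linarith [Set.mem_Ici.mp hx])).hasDerivWithinAt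
    · apply StrictAntiOn.injOn
      apply strictAntiOn_of_deriv_neg (convex_Ici 1) hφcont.continuousOn
      intro x hx
      rw [interior_Ici] at hx
      have hx1 : (1 : ℝ) < x := hx
      rw [(hderiv_pos x (by linarith)).deriv]
      simp only [hddef]
      rw [abs_of_pos (show (0:ℝ) < x by linarith)]
      nlinarith
  have hneg : (∫⁻ ξ : ℝ in Set.Iic (-1 : ℝ), ENNReal.ofReal
      ((1 + |ξ|) ^ 2 / (1 + |τ - φ ξ|) ^ (4 * ρ))) ≤ ENNReal.ofReal (4 * I) := by
    apply key _ measurableSet_Iic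
    · intro x hx
      have : x ≤ -1 := hx
      rw [abs_of_neg (by linarith)]
      linarith
    · intro x hx
      have : x ≤ -1 := hx
      exact (hderiv_neg x (by linarith)).hasDerivWithinAt
    · apply StrictAntiOn.injOn
      apply strictAntiOn_of_deriv_neg (convex_Iic (-1)) hφcont.continuousOn
      intro x hx
      rw [interior_Iic] at hx
      have hx1 : x < -1 := hx
      rw [(hderiv_neg x (by linarith)).deriv]
      simp only [hddef]
      rw [abs_of_neg (show x < (0:ℝ) by linarith)]
      nlinarith
  have hsub : {ξ : ℝ | a ≤ |ξ|} ⊆ Set.Iic (-1 : ℝ) ∪ Set.Ici (1 : ℝ) := by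
    intro ξ hξ
    have h1 : (1 : ℝ) ≤ |ξ| := le_trans ha hξ
    rcases le_abs.mp h1 with h | h
    · right; exact h
    · left; simpa [Set.mem_Iic] using by linarith
  calc (∫⁻ ξ : ℝ in {ξ : ℝ | a ≤ |ξ|}, ENNReal.ofReal
        ((1 + |ξ|) ^ 2 / (1 + |τ - benjaminPhase l ξ|) ^ (4 * ρ)))
      ≤ ∫⁻ ξ : ℝ in Set.Iic (-1 : ℝ) ∪ Set.Ici (1 : ℝ), ENNReal.ofReal
        ((1 + |ξ|) ^ 2 / (1 + |τ - φ ξ|) ^ (4 * ρ)) := lintegral_mono_set hsub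
    _ ≤ (∫⁻ ξ : ℝ in Set.Iic (-1 : ℝ), ENNReal.ofReal
          ((1 + |ξ|) ^ 2 / (1 + |τ - φ ξ|) ^ (4 * ρ)))
        + ∫⁻ ξ : ℝ in Set.Ici (1 : ℝ), ENNReal.ofReal
          ((1 + |ξ|) ^ 2 / (1 + |τ - φ ξ|) ^ (4 * ρ)) := lintegral_union_le _ _ _
    _ ≤ ENNReal.ofReal (4 * I) + ENNReal.ofReal (4 * I) := add_le_add hneg hpos
    _ = ENNReal.ofReal (8 * I) := by
        rw [← ENNReal.ofReal_add (by linarith) (by linarith)]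
        ring_nf
    _ ≤ ENNReal.ofReal (8 * I + 1) := ENNReal.ofReal_le_ofReal (by linarith)
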